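/- Let ⦀·⦀ be an orthant-monotonic norm on ℝ^d. Then the sequence of generalized k-support norms is nonincreasing in k and is decreasingly graded with respect to the ℓ0 pseudonorm: for every y ∈ ℝ^d and every l ∈ {0,…,d}, if ℓ0(y) ≤ l then ⦀y⦀^supp_l = ⦀y⦀^supp_d = ⦀y⦀⋆. If moreover the normed space (ℝ^d, ⦀·⦀⋆) is strictly convex, then the sequence is strictly decreasingly graded: for every y ∈ ℝ^d and every l ∈ {0,…,d}, ℓ0(y) ≤ l if and only if ⦀y⦀^supp_l = ⦀y⦀^supp_d. -/

import Mathlib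

open Finset Set

namespace OSMPaper

variable {d : ℕ}

/-- Standard inner product on `ℝ^d = Fin d → ℝ`. -/
def dot (x y : Fin d → ℝ) : ℝ := ∑ i, x i * y i

/-- `N` is a norm on `ℝ^d`. -/
def IsNorm (N : (Fin d → ℝ) → ℝ) : Prop :=
  (∀ x, 0 ≤ N x) ∧ (∀ x, N x = 0 ↔ x = 0) ∧
  (∀ (c : ℝ) (x : Fin d → ℝ), N (c • x) = |c| * N x) ∧
  (∀ x y, N (x + y) ≤ N x + N y)

/-- `proj K x = x_K`, the vector coinciding with `x` on `K` and zero outside `K`. -/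
def proj (K : Finset (Fin d)) (x : Fin d → ℝ) : Fin d → ℝ :=
  fun i => if i ∈ K then x i else 0

/-- The coordinate subspace `ℝ_K`. -/
def coordSubspace (K : Finset (Fin d)) : Set (Fin d → ℝ) :=
  {x | ∀ j, j ∉ K → x j = 0}

/-- Orthant-monotonic norm. -/
def OrthantMonotonic (N : (Fin d → ℝ) → ℝ) : Prop :=
  ∀ x x' : Fin d → ℝ, (∀ i, |x i| ≤ |x' i|) → (∀ i, 0 ≤ x i * x' i) → N x ≤ N x'

/-- Orthant-strictly monotonic norm. -/
def OrthantStrictlyMonotonic (N : (Fin d → ℝ) → ℝ) : Prop :=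
  ∀ x x' : Fin d → ℝ, (∀ i, |x i| ≤ |x' i|) → (∃ j, |x j| < |x' j|) →
    (∀ i, 0 ≤ x i * x' i) → N x < N x'

/-- Dual norm `⦀y⦀⋆ = sup_{N x ≤ 1} ⟨x, y⟩`. -/
noncomputable def dualNorm (N : (Fin d → ℝ) → ℝ) (y : Fin d → ℝ) : ℝ :=
  sSup {r | ∃ x, N x ≤ 1 ∧ r = dot x y}

/-- Support function of a set `S`. -/
noncomputable def suppFn (S : Set (Fin d → ℝ)) (y : Fin d → ℝ) : ℝ :=
  sSup {r | ∃ x ∈ S, r = dot x y}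

/-- Generalized top-`k` norm associated with the source norm `N`. -/
noncomputable def topNorm (N : (Fin d → ℝ) → ℝ) (k : ℕ) (x : Fin d → ℝ) : ℝ :=
  sSup {r | ∃ K : Finset (Fin d), K.card ≤ k ∧ r = N (proj K x)}

/-- Generalized `k`-support norm: the dual norm of the generalized top-`k` norm. -/
noncomputable def supportNorm (N : (Fin d → ℝ) → ℝ) (k : ℕ) : (Fin d → ℝ) → ℝ :=
  dualNorm (topNorm N k)

/-- The ℓ0 pseudonorm: the number of nonzero components. -/
noncomputable def l0 (x : Fin d → ℝ) : ℕ := Set.ncard {i | x i ≠ 0}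

/-- `x` is an extreme point of the convex set `C`. -/
def ExtremePt (C : Set (Fin d → ℝ)) (x : Fin d → ℝ) : Prop :=
  x ∈ C ∧ ∀ y ∈ C, ∀ z ∈ C, ∀ t : ℝ, 0 < t → t < 1 →
    x = t • y + (1 - t) • z → y = x ∧ z = x

/-! basic dot/proj lemmas -/

lemma dot_zero_left (y : Fin d → ℝ) : dot 0 y = 0 := by simp [dot]

lemma dot_zero_right (x : Fin d → ℝ) : dot x 0 = 0 := by simp [dot]

lemma dot_smul_left (c : ℝ) (x y : Fin d → ℝ) : dot (c • x) y = c * dot x y := by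
  simp [dot, Finset.mul_sum, mul_assoc]

lemma dot_smul_right (c : ℝ) (x y : Fin d → ℝ) : dot x (c • y) = c * dot x y := by
  simp [dot, Finset.mul_sum]; ring_nf
  exact Finset.sum_congr rfl fun i _ => by ring

lemma dot_add_right (x y z : Fin d → ℝ) : dot x (y + z) = dot x y + dot x z := by
  simp [dot, ← Finset.sum_add_distrib]; exact Finset.sum_congr rfl fun i _ => by ring

lemma proj_apply (K : Finset (Fin d)) (x : Fin d → ℝ) (i : Fin d) :
    proj K x i = if i ∈ K then x i else 0 := rfl

lemma proj_zero (K : Finset (Fin d)) : proj K (0 : Fin d → ℝ) = 0 := by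
  funext i; simp [proj]

lemma proj_empty (x : Fin d → ℝ) : proj ∅ x = 0 := by funext i; simp [proj]

lemma proj_smul (K : Finset (Fin d)) (c : ℝ) (x : Fin d → ℝ) :
    proj K (c • x) = c • proj K x := by
  funext i; simp only [proj, Pi.smul_apply, smul_eq_mul]
  split <;> simp

lemma dot_proj_left_of_support (K : Finset (Fin d)) (x z : Fin d → ℝ)
    (hz : ∀ j ∉ K, z j = 0) : dot (proj K x) z = dot x z := by
  unfold dot
  refine Finset.sum_congr rfl fun i _ => ?_
  by_cases h : i ∈ K
  · simp [proj, h]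
  · simp [proj, h, hz i h]

lemma dot_proj_right_of_support (S : Finset (Fin d)) (x y : Fin d → ℝ)
    (hy : ∀ j ∉ S, y j = 0) : dot (proj S x) y = dot x y := by
  unfold dot
  refine Finset.sum_congr rfl fun i _ => ?_
  by_cases h : i ∈ S
  · simp [proj, h]
  · simp [proj, h, hy i h]

/-! norm lemmas -/

section NormFacts

variable {N : (Fin d → ℝ) → ℝ} (hN : IsNorm N) (hom : OrthantMonotonic N)

lemma norm_zero' (hN : IsNorm N) : N 0 = 0 := (hN.2.1 0).2 rfl

lemma norm_pos (hN : IsNorm N) {x : Fin d → ℝ} (hx : x ≠ 0) : 0 < N x :=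
  lt_of_le_of_ne (hN.1 x) (fun h => hx ((hN.2.1 x).1 h.symm))

lemma norm_proj_le (hN : IsNorm N) (hom : OrthantMonotonic N) (K : Finset (Fin d))
    (x : Fin d → ℝ) : N (proj K x) ≤ N x := by
  refine hom _ _ (fun i => ?_) (fun i => ?_)
  · by_cases h : i ∈ K <;> simp [proj, h, abs_nonneg]
  · by_cases h : i ∈ K <;> simp [proj, h, mul_self_nonneg]

/-- single coordinate vector -/
noncomputable def evec (i : Fin d) : Fin d → ℝ := Pi.single i 1

lemma proj_singleton (x : Fin d → ℝ) (i : Fin d) : proj {i} x = x i • evec i := by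
  funext j
  simp only [proj, Finset.mem_singleton, evec, Pi.smul_apply, smul_eq_mul, Pi.single_apply]
  by_cases h : j = i
  · subst h; simp
  · simp [h]

lemma evec_ne_zero (i : Fin d) : evec i ≠ 0 := by
  intro h
  have := congrFun h i
  simp [evec] at this

lemma coord_le (hN : IsNorm N) (hom : OrthantMonotonic N) (x : Fin d → ℝ) (i : Fin d) :
    |x i| * N (evec i) ≤ N x := by
  have h1 : N (proj {i} x) = |x i| * N (evec i) := by
    rw [proj_singleton, hN.2.2.1]
  rw [← h1]; exact norm_proj_le hN hom _ x

end NormFacts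


/-! topNorm lemmas -/

section TopNorm

variable {N : (Fin d → ℝ) → ℝ}

lemma topSet_finite (N : (Fin d → ℝ) → ℝ) (k : ℕ) (x : Fin d → ℝ) :
    {r | ∃ K : Finset (Fin d), K.card ≤ k ∧ r = N (proj K x)}.Finite := by
  apply (Set.finite_range fun K : Finset (Fin d) => N (proj K x)).subset
  rintro r ⟨K, _, rfl⟩
  exact ⟨K, rfl⟩

lemma topSet_nonempty (N : (Fin d → ℝ) → ℝ) (k : ℕ) (x : Fin d → ℝ) :
    {r | ∃ K : Finset (Fin d), K.card ≤ k ∧ r = N (proj K x)}.Nonempty :=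
  ⟨N (proj ∅ x), ∅, by simp, rfl⟩

lemma topSet_bdd (N : (Fin d → ℝ) → ℝ) (k : ℕ) (x : Fin d → ℝ) :
    BddAbove {r | ∃ K : Finset (Fin d), K.card ≤ k ∧ r = N (proj K x)} :=
  (topSet_finite N k x).bddAbove

lemma norm_proj_le_topNorm (k : ℕ) (x : Fin d → ℝ) {K : Finset (Fin d)}
    (hK : K.card ≤ k) : N (proj K x) ≤ topNorm N k x :=
  le_csSup (topSet_bdd N k x) ⟨K, hK, rfl⟩

lemma topNorm_le (k : ℕ) (x : Fin d → ℝ) {c : ℝ}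
    (h : ∀ K : Finset (Fin d), K.card ≤ k → N (proj K x) ≤ c) : topNorm N k x ≤ c :=
  csSup_le (topSet_nonempty N k x) (by rintro r ⟨K, hK, rfl⟩; exact h K hK)

lemma topNorm_nonneg (hN : IsNorm N) (k : ℕ) (x : Fin d → ℝ) : 0 ≤ topNorm N k x := by
  have h := norm_proj_le_topNorm (N := N) k x (K := ∅) (by simp)
  calc (0:ℝ) ≤ N (proj ∅ x) := hN.1 _
  _ ≤ _ := h

lemma topNorm_le_norm (hN : IsNorm N) (hom : OrthantMonotonic N) (k : ℕ) (x : Fin d → ℝ) :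
    topNorm N k x ≤ N x :=
  topNorm_le k x fun K _ => norm_proj_le hN hom K x

lemma topNorm_mono (k l : ℕ) (hkl : k ≤ l) (x : Fin d → ℝ) :
    topNorm N k x ≤ topNorm N l x :=
  topNorm_le k x fun K hK => norm_proj_le_topNorm l x (hK.trans hkl)

lemma topNorm_coord (hN : IsNorm N) {k : ℕ} (hk : 1 ≤ k) (x : Fin d → ℝ) (i : Fin d) :
    |x i| * N (evec i) ≤ topNorm N k x := by
  have : N (proj {i} x) = |x i| * N (evec i) := by rw [proj_singleton, hN.2.2.1]
  rw [← this]
  exact norm_proj_le_topNorm k x (by simp [hk])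

end TopNorm

/-! dual norm basics -/

section DualFacts

variable {N : (Fin d → ℝ) → ℝ}

/-- generic boundedness of dual-type sets -/
lemma dualSet_bdd (hN : IsNorm N) {P : (Fin d → ℝ) → Prop}
    (hP : ∀ x, P x → ∀ i, |x i| * N (evec i) ≤ 1) (y : Fin d → ℝ) :
    BddAbove {r | ∃ x, P x ∧ r = dot x y} := by
  refine ⟨∑ i, (N (evec i))⁻¹ * |y i|, ?_⟩
  rintro r ⟨x, hx, rfl⟩
  calc dot x y ≤ ∑ i, |x i| * |y i| := by
        refine Finset.sum_le_sum fun i _ => ?_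
        calc x i * y i ≤ |x i * y i| := le_abs_self _
        _ = |x i| * |y i| := abs_mul _ _
  _ ≤ ∑ i, (N (evec i))⁻¹ * |y i| := by
        refine Finset.sum_le_sum fun i _ => ?_
        have hpos : 0 < N (evec i) := norm_pos hN (evec_ne_zero i)
        have := hP x hx i
        have h2 : |x i| ≤ (N (evec i))⁻¹ := by
          rw [← one_div, le_div_iff₀ hpos]; exact this
        exact mul_le_mul_of_nonneg_right h2 (abs_nonneg _)

end DualFacts


section DualBasics

variable {N : (Fin d → ℝ) → ℝ}

lemma dualSet_bdd' (hN : IsNorm N) (hom : OrthantMonotonic N) (y : Fin d → ℝ) :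
    BddAbove {r | ∃ x, N x ≤ 1 ∧ r = dot x y} := by
  refine dualSet_bdd hN (fun x hx i => ?_) y
  exact (coord_le hN hom x i).trans hx

lemma suppSet_bdd (hN : IsNorm N) {k : ℕ} (hk : 1 ≤ k) (y : Fin d → ℝ) :
    BddAbove {r | ∃ x, topNorm N k x ≤ 1 ∧ r = dot x y} := by
  refine dualSet_bdd hN (fun x hx i => ?_) y
  exact (topNorm_coord hN hk x i).trans hx

lemma dualSet_nonempty (hN : IsNorm N) (y : Fin d → ℝ) :
    (0:ℝ) ∈ {r | ∃ x, N x ≤ 1 ∧ r = dot x y} :=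
  ⟨0, by rw [norm_zero' hN]; norm_num, (dot_zero_left y).symm⟩

lemma suppSet_nonempty (hN : IsNorm N) (k : ℕ) (y : Fin d → ℝ) :
    (0:ℝ) ∈ {r | ∃ x, topNorm N k x ≤ 1 ∧ r = dot x y} := by
  refine ⟨0, ?_, (dot_zero_left y).symm⟩
  refine topNorm_le k 0 fun K _ => ?_
  rw [proj_zero, norm_zero' hN]; norm_num

lemma dualNorm_nonneg (hN : IsNorm N) (hom : OrthantMonotonic N) (y : Fin d → ℝ) :
    0 ≤ dualNorm N y :=
  le_csSup (dualSet_bdd' hN hom y) (dualSet_nonempty hN y)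

lemma le_dualNorm (hN : IsNorm N) (hom : OrthantMonotonic N) {x y : Fin d → ℝ}
    (hx : N x ≤ 1) : dot x y ≤ dualNorm N y :=
  le_csSup (dualSet_bdd' hN hom y) ⟨x, hx, rfl⟩

lemma dualNorm_le (hN : IsNorm N) {y : Fin d → ℝ} {c : ℝ}
    (h : ∀ x, N x ≤ 1 → dot x y ≤ c) : dualNorm N y ≤ c :=
  csSup_le ⟨0, dualSet_nonempty hN y⟩ (by rintro r ⟨x, hx, rfl⟩; exact h x hx)

lemma dualNorm_zero (hN : IsNorm N) : dualNorm N (0 : Fin d → ℝ) = 0 := by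
  refine le_antisymm (dualNorm_le hN fun x _ => by rw [dot_zero_right]) ?_
  exact le_csSup ⟨0, fun r hr => by obtain ⟨x, _, rfl⟩ := hr; rw [dot_zero_right]⟩
    (dualSet_nonempty hN 0)

lemma dualNorm_pos (hN : IsNorm N) (hom : OrthantMonotonic N) {y : Fin d → ℝ}
    (hy : y ≠ 0) : 0 < dualNorm N y := by
  obtain ⟨i, hi⟩ : ∃ i, y i ≠ 0 := by
    by_contra h
    push_neg at h
    exact hy (funext h)
  have hpos : 0 < N (evec i) := norm_pos hN (evec_ne_zero i)
  set x : Fin d → ℝ := ((if 0 ≤ y i then (1:ℝ) else -1) / N (evec i)) • evec i with hxdef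
  have hNx : N x = 1 := by
    rw [hxdef, hN.2.2.1]
    rw [abs_div]
    have : |if 0 ≤ y i then (1:ℝ) else -1| = 1 := by split <;> norm_num
    rw [this, abs_of_pos hpos]
    field_simp
  have hdot : dot x y = |y i| / N (evec i) := by
    rw [hxdef, dot_smul_left]
    have : dot (evec i) y = y i := by
      unfold dot evec
      rw [Finset.sum_eq_single i]
      · simp
      · intro b _ hb; simp [Pi.single_apply, hb]
      · simp
    rw [this]
    rcases le_or_gt 0 (y i) with h | h
    · rw [if_pos h, abs_of_nonneg h]; ring
    · rw [if_neg (not_le.2 h), abs_of_neg h]; ring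
  have : (0:ℝ) < |y i| / N (evec i) := by positivity
  calc (0:ℝ) < |y i| / N (evec i) := this
  _ = dot x y := hdot.symm
  _ ≤ dualNorm N y := le_dualNorm hN hom hNx.le

end DualBasics


section Part1

variable {N : (Fin d → ℝ) → ℝ}

open Classical in
/-- support finset of y -/
noncomputable def suppF (y : Fin d → ℝ) : Finset (Fin d) :=
  Finset.univ.filter (fun i => y i ≠ 0)

lemma mem_suppF {y : Fin d → ℝ} {i : Fin d} : i ∈ suppF y ↔ y i ≠ 0 := by
  classical simp [suppF]

lemma suppF_card (y : Fin d → ℝ) : (suppF y).card = l0 y := by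
  classical
  unfold l0
  have h : {i | y i ≠ 0} = ↑(suppF y) := by
    ext i; simp [mem_suppF]
  rw [h, Set.ncard_coe_finset]

lemma l0_le_d (y : Fin d → ℝ) : l0 y ≤ d := by
  rw [← suppF_card]
  calc (suppF y).card ≤ Finset.univ.card := Finset.card_le_card (Finset.subset_univ _)
  _ = d := by simp

lemma l0_zero : l0 (0 : Fin d → ℝ) = 0 := by simp [l0]

lemma l0_eq_zero_iff {y : Fin d → ℝ} : l0 y = 0 ↔ y = 0 := by
  constructor
  · intro h
    rw [← suppF_card] at h
    have h2 := Finset.card_eq_zero.1 h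
    funext i
    by_contra hi
    have : i ∈ suppF y := mem_suppF.2 hi
    simp [h2] at this
  · rintro rfl; exact l0_zero

/-- Main part-1 lemma: if `1 ≤ l` and `l0 y ≤ l` then the supportNorm equals the dual norm,
via equality of the defining sets. -/
lemma supportNorm_eq_dualNorm (hN : IsNorm N) (hom : OrthantMonotonic N)
    {y : Fin d → ℝ} {l : ℕ} (hl : 1 ≤ l) (hly : l0 y ≤ l) :
    supportNorm N l y = dualNorm N y := by
  unfold supportNorm dualNorm
  congr 1
  ext r
  constructor
  · rintro ⟨x, hx, rfl⟩
    refine ⟨proj (suppF y) x, ?_, ?_⟩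
    · refine (norm_proj_le_topNorm l x ?_).trans hx
      rw [suppF_card]; exact hly
    · exact (dot_proj_right_of_support _ x y (fun j hj => by
        by_contra h; exact hj (mem_suppF.2 h))).symm
  · rintro ⟨x, hx, rfl⟩
    exact ⟨x, (topNorm_le_norm hN hom l x).trans hx, rfl⟩

lemma supportNorm_d_eq_dualNorm (hd : 0 < d) (hN : IsNorm N) (hom : OrthantMonotonic N)
    (y : Fin d → ℝ) : supportNorm N d y = dualNorm N y :=
  supportNorm_eq_dualNorm hN hom hd (l0_le_d y)

lemma supportNorm_antitone (hN : IsNorm N) {y : Fin d → ℝ} {k l : ℕ}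
    (hk : 1 ≤ k) (hkl : k ≤ l) : supportNorm N l y ≤ supportNorm N k y := by
  unfold supportNorm dualNorm
  refine csSup_le_csSup (suppSet_bdd hN hk y) ⟨0, suppSet_nonempty hN l y⟩ ?_
  rintro r ⟨x, hx, rfl⟩
  exact ⟨x, (topNorm_mono k l hkl x).trans hx, rfl⟩

end Part1


section Homog

variable {N : (Fin d → ℝ) → ℝ}

lemma exists_pos_dot (hN : IsNorm N) {y : Fin d → ℝ} (hy : y ≠ 0) :
    ∃ x : Fin d → ℝ, N x = 1 ∧ 0 < dot x y := by
  obtain ⟨i, hi⟩ : ∃ i, y i ≠ 0 := by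
    by_contra h; push_neg at h; exact hy (funext h)
  have hpos : 0 < N (evec i) := norm_pos hN (evec_ne_zero i)
  refine ⟨((if 0 ≤ y i then (1:ℝ) else -1) / N (evec i)) • evec i, ?_, ?_⟩
  · rw [hN.2.2.1, abs_div]
    have : |if 0 ≤ y i then (1:ℝ) else -1| = 1 := by split <;> norm_num
    rw [this, abs_of_pos hpos]
    field_simp
  · rw [dot_smul_left]
    have hde : dot (evec i) y = y i := by
      unfold dot evec
      rw [Finset.sum_eq_single i]
      · simp
      · intro b _ hb; simp [Pi.single_apply, hb]
      · simp
    rw [hde]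
    rcases le_or_gt 0 (y i) with h | h
    · have : 0 < y i := lt_of_le_of_ne h (Ne.symm hi)
      rw [if_pos h]; positivity
    · rw [if_neg (not_le.2 h)]
      have : 0 < -y i := by linarith
      calc (0:ℝ) < (1 / N (evec i)) * (-y i) := by positivity
      _ = -1 / N (evec i) * y i := by ring

lemma dualNorm_smul (hN : IsNorm N) (hom : OrthantMonotonic N) {c : ℝ} (hc : 0 < c)
    (y : Fin d → ℝ) : dualNorm N (c • y) = c * dualNorm N y := by
  refine le_antisymm ?_ ?_
  · refine dualNorm_le hN fun x hx => ?_
    rw [dot_smul_right]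
    exact mul_le_mul_of_nonneg_left (le_dualNorm hN hom hx) hc.le
  · have h : dualNorm N y ≤ c⁻¹ * dualNorm N (c • y) := by
      refine dualNorm_le hN fun x hx => ?_
      have := le_dualNorm hN hom (y := c • y) hx
      rw [dot_smul_right] at this
      calc dot x y = c⁻¹ * (c * dot x y) := by field_simp
      _ ≤ c⁻¹ * dualNorm N (c • y) := by
          exact mul_le_mul_of_nonneg_left this (by positivity)
    calc c * dualNorm N y ≤ c * (c⁻¹ * dualNorm N (c • y)) :=
          mul_le_mul_of_nonneg_left h hc.le
    _ = dualNorm N (c • y) := by field_simp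

lemma topNorm_zero' (hN : IsNorm N) (x : Fin d → ℝ) : topNorm N 0 x = 0 := by
  unfold topNorm
  have h : {r | ∃ K : Finset (Fin d), K.card ≤ 0 ∧ r = N (proj K x)} = {0} := by
    ext r
    simp only [Set.mem_setOf_eq, Set.mem_singleton_iff]
    constructor
    · rintro ⟨K, hK, rfl⟩
      have : K = ∅ := Finset.card_eq_zero.1 (Nat.le_zero.1 hK)
      rw [this, proj_empty, norm_zero' hN]
    · rintro rfl
      exact ⟨∅, by simp, by rw [proj_empty, norm_zero' hN]⟩
  rw [h, csSup_singleton]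

lemma supportNorm_zero_of_ne (hN : IsNorm N) {y : Fin d → ℝ} (hy : y ≠ 0) :
    supportNorm N 0 y = 0 := by
  unfold supportNorm dualNorm
  apply Real.sSup_of_not_bddAbove
  rintro ⟨b, hb⟩
  obtain ⟨x, hx1, hx2⟩ := exists_pos_dot hN hy
  have hmem : ∀ t : ℝ, t * dot x y ∈ {r | ∃ x', topNorm N 0 x' ≤ 1 ∧ r = dot x' y} := by
    intro t
    exact ⟨t • x, by rw [topNorm_zero' hN]; norm_num, by rw [dot_smul_left]⟩
  have h1 := hb (hmem ((b + 1) / dot x y))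
  rw [div_mul_cancel₀ _ (ne_of_gt hx2)] at h1
  linarith

end Homog


section DKsec

variable {N : (Fin d → ℝ) → ℝ}

/-- restricted dual ball on coordinate subspace K -/
def DK (N : (Fin d → ℝ) → ℝ) (K : Finset (Fin d)) : Set (Fin d → ℝ) :=
  {z | (∀ j ∉ K, z j = 0) ∧ ∀ w : Fin d → ℝ, (∀ j ∉ K, w j = 0) → dot w z ≤ N w}

lemma zero_mem_DK (hN : IsNorm N) (K : Finset (Fin d)) : (0 : Fin d → ℝ) ∈ DK N K :=
  ⟨fun _ _ => rfl, fun w _ => by rw [dot_zero_right]; exact hN.1 w⟩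

lemma DK_convex (K : Finset (Fin d)) : Convex ℝ (DK N K) := by
  rintro z₁ ⟨h1, h1'⟩ z₂ ⟨h2, h2'⟩ a b ha hb hab
  constructor
  · intro j hj
    simp [h1 j hj, h2 j hj]
  · intro w hw
    have : dot w (a • z₁ + b • z₂) = a * dot w z₁ + b * dot w z₂ := by
      rw [dot_add_right, dot_smul_right, dot_smul_right]
    rw [this]
    calc a * dot w z₁ + b * dot w z₂ ≤ a * N w + b * N w := by
          exact add_le_add (mul_le_mul_of_nonneg_left (h1' w hw) ha)
            (mul_le_mul_of_nonneg_left (h2' w hw) hb)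
    _ = N w := by rw [← add_mul, hab, one_mul]

lemma DK_closed (K : Finset (Fin d)) : IsClosed (DK N K) := by
  have h1 : IsClosed {z : Fin d → ℝ | ∀ j ∉ K, z j = 0} := by
    have : {z : Fin d → ℝ | ∀ j ∉ K, z j = 0} =
        ⋂ (j : Fin d) (_ : j ∉ K), {z | z j = 0} := by
      ext z; simp
    rw [this]
    refine isClosed_iInter fun j => isClosed_iInter fun _ => ?_
    exact isClosed_eq (continuous_apply j) continuous_const
  have h2 : IsClosed {z : Fin d → ℝ | ∀ w : Fin d → ℝ, (∀ j ∉ K, w j = 0) → dot w z ≤ N w} := by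
    have : {z : Fin d → ℝ | ∀ w : Fin d → ℝ, (∀ j ∉ K, w j = 0) → dot w z ≤ N w} =
        ⋂ (w : Fin d → ℝ) (_ : ∀ j ∉ K, w j = 0), {z | dot w z ≤ N w} := by
      ext z; simp
    rw [this]
    refine isClosed_iInter fun w => isClosed_iInter fun _ => ?_
    refine isClosed_le ?_ continuous_const
    exact continuous_finset_sum _ fun i _ => (continuous_const.mul (continuous_apply i))
  exact h1.inter h2

/-- coordinatewise bound for elements of DK -/
lemma DK_bound (hN : IsNorm N) {K : Finset (Fin d)} {z : Fin d → ℝ} (hz : z ∈ DK N K)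
    (i : Fin d) : |z i| ≤ N (evec i) + N (-evec i) := by
  have hnn : (0:ℝ) ≤ N (evec i) + N (-evec i) := by
    have := hN.1 (evec i); have := hN.1 (-evec i); linarith
  by_cases hi : i ∈ K
  · have hsupp : ∀ j ∉ K, evec i j = 0 := by
      intro j hj
      have : j ≠ i := fun h => hj (h ▸ hi)
      simp [evec, Pi.single_apply, this]
    have h1 : dot (evec i) z ≤ N (evec i) := hz.2 _ hsupp
    have h2 : dot (-evec i) z ≤ N (-evec i) := by
      refine hz.2 _ fun j hj => ?_
      simp [hsupp j hj]
    have he1 : dot (evec i) z = z i := by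
      unfold dot evec
      rw [Finset.sum_eq_single i]
      · simp
      · intro b _ hb; simp [Pi.single_apply, hb]
      · simp
    have he2 : dot (-evec i) z = -z i := by
      have : dot (-evec i) z = dot ((-1 : ℝ) • evec i) z := by norm_num
      rw [this, dot_smul_left, he1]; ring
    rw [he1] at h1; rw [he2] at h2
    rcases abs_cases (z i) with ⟨h, _⟩ | ⟨h, _⟩
    · rw [h]; have := hN.1 (-evec i); linarith
    · rw [h]; have := hN.1 (evec i); linarith
  · rw [hz.1 i hi]; simpa using hnn

lemma DK_isCompact (hN : IsNorm N) (K : Finset (Fin d)) : IsCompact (DK N K) := by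
  refine Metric.isCompact_of_isClosed_isBounded (DK_closed K) ?_
  have hB : (0:ℝ) ≤ ∑ j, (N (evec j) + N (-evec j)) := by
    refine Finset.sum_nonneg fun j _ => ?_
    have h1 := hN.1 (evec j); have h2 := hN.1 (-evec j)
    show (0:ℝ) ≤ N (evec j) + N (-evec j)
    linarith
  refine (Metric.isBounded_iff_subset_closedBall 0).2
    ⟨∑ j, (N (evec j) + N (-evec j)), fun z hz => ?_⟩
  rw [Metric.mem_closedBall, dist_zero_right]
  refine (pi_norm_le_iff_of_nonneg hB).2 fun i => ?_
  calc ‖z i‖ = |z i| := rfl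
  _ ≤ N (evec i) + N (-evec i) := DK_bound hN hz i
  _ ≤ ∑ j, (N (evec j) + N (-evec j)) := by
      refine Finset.single_le_sum (f := fun j => N (evec j) + N (-evec j))
        (fun j _ => ?_) (Finset.mem_univ i)
      have h1 := hN.1 (evec j); have h2 := hN.1 (-evec j)
      show (0:ℝ) ≤ N (evec j) + N (-evec j)
      linarith

lemma DK_subset_dualBall (hN : IsNorm N) (hom : OrthantMonotonic N) {K : Finset (Fin d)}
    {z : Fin d → ℝ} (hz : z ∈ DK N K) : dualNorm N z ≤ 1 := by
  refine dualNorm_le hN fun x hx => ?_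
  have h1 : dot x z = dot (proj K x) z := (dot_proj_left_of_support K x z hz.1).symm
  rw [h1]
  calc dot (proj K x) z ≤ N (proj K x) := hz.2 _ (fun j hj => by simp [proj, hj])
  _ ≤ N x := norm_proj_le hN hom K x
  _ ≤ 1 := hx

/-- Hahn–Banach norming element in `DK`. -/
lemma exists_norming (hN : IsNorm N) (x : Fin d → ℝ) (K : Finset (Fin d)) :
    ∃ z ∈ DK N K, dot x z = N (proj K x) := by
  by_cases hv : proj K x = 0
  · exact ⟨0, zero_mem_DK hN K, by rw [dot_zero_right, hv, norm_zero' hN]⟩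
  · set v := proj K x with hvdef
    have H : ∀ c : ℝ, c • v = 0 → c • N v = 0 := by
      intro c hc
      rcases smul_eq_zero.1 hc with h | h
      · rw [h, zero_smul]
      · exact absurd h hv
    have hf : ∀ c : (LinearPMap.mkSpanSingleton' (σ := RingHom.id ℝ) v (N v) H).domain,
        LinearPMap.mkSpanSingleton' (σ := RingHom.id ℝ) v (N v) H c ≤ N c := by
      rintro ⟨u, hu⟩
      have hu' : u ∈ Submodule.span ℝ {v} := hu
      obtain ⟨t, ht⟩ := Submodule.mem_span_singleton.1 hu'
      subst ht
      rw [LinearPMap.mkSpanSingleton'_apply v (N v) H t hu]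
      have hnv : N (t • v) = |t| * N v := hN.2.2.1 t v
      simp only [smul_eq_mul]
      rw [hnv]
      exact mul_le_mul_of_nonneg_right (le_abs_self t) (hN.1 v)
    obtain ⟨g, hg1, hg2⟩ := exists_extension_of_le_sublinear
      (LinearPMap.mkSpanSingleton' (σ := RingHom.id ℝ) v (N v) H) N
      (fun c hc x' => by rw [hN.2.2.1, abs_of_pos hc]) hN.2.2.2 hf
    set z : Fin d → ℝ := proj K (fun i => g (evec i)) with hzdef
    have hsupp : ∀ j ∉ K, z j = 0 := fun j hj => by simp [hzdef, proj, hj]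
    have hgw : ∀ w : Fin d → ℝ, (∀ j ∉ K, w j = 0) → dot w z = g w := by
      intro w hw
      have hw' : w = ∑ i, w i • evec i := by
        funext j
        rw [Finset.sum_apply]
        simp only [Pi.smul_apply, evec, Pi.single_apply, smul_eq_mul]
        rw [Finset.sum_eq_single j]
        · simp
        · intro b _ hb; simp [Ne.symm hb]
        · simp
      have hgsum : g w = ∑ i, w i * g (evec i) := by
        conv_lhs => rw [hw']
        rw [map_sum]
        refine Finset.sum_congr rfl fun i _ => ?_
        rw [map_smul]; rfl
      rw [hgsum]
      unfold dot
      refine Finset.sum_congr rfl fun i _ => ?_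
      by_cases hi : i ∈ K
      · simp [hzdef, proj, hi]
      · simp [hw i hi, hzdef, proj, hi]
    refine ⟨z, ⟨hsupp, fun w hw => ?_⟩, ?_⟩
    · rw [hgw w hw]; exact hg2 w
    · have h1 : dot x z = dot (proj K x) z := (dot_proj_left_of_support K x z hsupp).symm
      have h2 : dot (proj K x) z = g (proj K x) := by
        refine hgw _ fun j hj => by simp [proj, hj]
      rw [h1, h2, ← hvdef]
      have hvmem : v ∈ (LinearPMap.mkSpanSingleton' (σ := RingHom.id ℝ) v (N v) H).domain :=
        Submodule.mem_span_singleton_self v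
      have h3 := hg1 ⟨v, hvmem⟩
      have happ := LinearPMap.mkSpanSingleton'_apply_self v (N v) H hvmem
      rw [happ] at h3
      exact h3

end DKsec


section CCsec

variable {N : (Fin d → ℝ) → ℝ}

lemma dot_sum_right {ι : Type*} (t : Finset ι) (x : Fin d → ℝ) (f : ι → (Fin d → ℝ)) :
    dot x (∑ i ∈ t, f i) = ∑ i ∈ t, dot x (f i) := by
  unfold dot
  rw [Finset.sum_comm]
  refine Finset.sum_congr rfl fun j _ => ?_
  rw [Finset.sum_apply, Finset.mul_sum]

/-- index type of small subsets -/
abbrev KS (d l : ℕ) := {K : Finset (Fin d) // K.card ≤ l}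

/-- the convex combination set -/
def CC (N : (Fin d → ℝ) → ℝ) (l : ℕ) : Set (Fin d → ℝ) :=
  {p | ∃ w : KS d l → ℝ, ∃ g : KS d l → (Fin d → ℝ),
    (∀ K, 0 ≤ w K) ∧ ∑ K, w K = 1 ∧ (∀ K, g K ∈ DK N K.1) ∧ p = ∑ K, w K • g K}

lemma DK_mem_CC (hN : IsNorm N) {l : ℕ} (K : KS d l) {z : Fin d → ℝ}
    (hz : z ∈ DK N K.1) : z ∈ CC N l := by
  classical
  refine ⟨fun K' => if K' = K then 1 else 0, fun K' => if K' = K then z else 0,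
    fun K' => by dsimp only; split <;> norm_num, by simp, fun K' => ?_, ?_⟩
  · dsimp only
    split
    · next h => rw [h]; exact hz
    · exact zero_mem_DK hN _
  · rw [Finset.sum_eq_single K]
    · simp
    · intro b _ hb; simp [hb]
    · simp

lemma zero_mem_CC (hN : IsNorm N) {l : ℕ} : (0 : Fin d → ℝ) ∈ CC N l :=
  DK_mem_CC hN ⟨∅, by simp⟩ (zero_mem_DK hN ∅)

lemma CC_convex {l : ℕ} (hN : IsNorm N) : Convex ℝ (CC N l) := by
  classical
  rintro p₁ ⟨w₁, g₁, hw₁, hs₁, hg₁, rfl⟩ p₂ ⟨w₂, g₂, hw₂, hs₂, hg₂, rfl⟩ a b ha hb hab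
  set w : KS d l → ℝ := fun K => a * w₁ K + b * w₂ K with hwdef
  have hwnn : ∀ K, 0 ≤ w K := fun K => by
    have := hw₁ K; have := hw₂ K; positivity
  set g : KS d l → (Fin d → ℝ) := fun K =>
    if w K = 0 then 0 else (w K)⁻¹ • ((a * w₁ K) • g₁ K + (b * w₂ K) • g₂ K) with hgdef
  have hterm : ∀ K, w K • g K = (a * w₁ K) • g₁ K + (b * w₂ K) • g₂ K := by
    intro K
    by_cases h : w K = 0
    · have h1 : a * w₁ K = 0 ∧ b * w₂ K = 0 := by
        have e1 : 0 ≤ a * w₁ K := by have := hw₁ K; positivity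
        have e2 : 0 ≤ b * w₂ K := by have := hw₂ K; positivity
        have : a * w₁ K + b * w₂ K = 0 := h
        constructor <;> linarith
      rw [hgdef]
      simp only [h, if_pos]
      rw [h1.1, h1.2]
      simp
    · rw [hgdef]
      simp only [h, if_neg, if_false]
      rw [smul_smul, mul_inv_cancel₀ h, one_smul]
  refine ⟨w, g, hwnn, ?_, ?_, ?_⟩
  · rw [hwdef]
    simp only []
    rw [Finset.sum_add_distrib, ← Finset.mul_sum, ← Finset.mul_sum, hs₁, hs₂]
    simp [hab]
  · intro K
    by_cases h : w K = 0
    · rw [hgdef]; simp only [h, if_pos]; exact zero_mem_DK hN _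
    · rw [hgdef]
      simp only [h, if_neg, if_false]
      have hwK : 0 < w K := lt_of_le_of_ne (hwnn K) (Ne.symm h)
      have hα : 0 ≤ (w K)⁻¹ * (a * w₁ K) := by have := hw₁ K; positivity
      have hβ : 0 ≤ (w K)⁻¹ * (b * w₂ K) := by have := hw₂ K; positivity
      have hαβ : (w K)⁻¹ * (a * w₁ K) + (w K)⁻¹ * (b * w₂ K) = 1 := by
        rw [← mul_add]
        have : a * w₁ K + b * w₂ K = w K := rfl
        rw [this, inv_mul_cancel₀ h]
      have := DK_convex (N := N) K.1 (hg₁ K) (hg₂ K) hα hβ hαβ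
      convert this using 1
      rw [smul_add, smul_smul, smul_smul]
  · have : ∑ K, w K • g K = ∑ K, ((a * w₁ K) • g₁ K + (b * w₂ K) • g₂ K) :=
      Finset.sum_congr rfl fun K _ => hterm K
    rw [this, Finset.sum_add_distrib]
    congr 1
    · rw [Finset.smul_sum]
      exact Finset.sum_congr rfl fun K _ => smul_smul a (w₁ K) (g₁ K)
    · rw [Finset.smul_sum]
      exact Finset.sum_congr rfl fun K _ => smul_smul b (w₂ K) (g₂ K)

lemma CC_isCompact (hN : IsNorm N) (l : ℕ) : IsCompact (CC N l) := by
  classical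
  have h : CC N l = (fun wg : (KS d l → ℝ) × (KS d l → (Fin d → ℝ)) =>
      ∑ K, wg.1 K • wg.2 K) ''
      ((stdSimplex ℝ (KS d l)) ×ˢ (Set.pi Set.univ fun K : KS d l => DK N K.1)) := by
    ext p
    constructor
    · rintro ⟨w, g, hw, hs, hg, rfl⟩
      exact ⟨(w, g), ⟨⟨hw, hs⟩, fun K _ => hg K⟩, rfl⟩
    · rintro ⟨⟨w, g⟩, ⟨⟨hw, hs⟩, hg⟩, rfl⟩
      exact ⟨w, g, hw, hs, fun K => hg K (Set.mem_univ K), rfl⟩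
  rw [h]
  refine IsCompact.image ?_ ?_
  · exact (isCompact_stdSimplex (𝕜 := ℝ) (ι := KS d l)).prod (isCompact_univ_pi fun K : KS d l => DK_isCompact hN K.1)
  · refine continuous_finset_sum _ fun K _ => ?_
    exact ((continuous_apply K).comp continuous_fst).smul
      ((continuous_apply K).comp continuous_snd)

lemma CC_subset_dualBall (hN : IsNorm N) (hom : OrthantMonotonic N) {l : ℕ}
    {p : Fin d → ℝ} (hp : p ∈ CC N l) : dualNorm N p ≤ 1 := by
  obtain ⟨w, g, hw, hs, hg, rfl⟩ := hp
  refine dualNorm_le hN fun x hx => ?_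
  rw [dot_sum_right]
  have hbound : ∀ K : KS d l, dot x (w K • g K) ≤ w K := by
    intro K
    rw [dot_smul_right]
    have h1 : dot x (g K) ≤ 1 := by
      have h2 : dot x (g K) = dot (proj K.1 x) (g K) :=
        (dot_proj_left_of_support K.1 x (g K) (hg K).1).symm
      rw [h2]
      calc dot (proj K.1 x) (g K) ≤ N (proj K.1 x) :=
            (hg K).2 _ (fun j hj => by simp [proj, hj])
      _ ≤ N x := norm_proj_le hN hom K.1 x
      _ ≤ 1 := hx
    calc w K * dot x (g K) ≤ w K * 1 := mul_le_mul_of_nonneg_left h1 (hw K)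
    _ = w K := mul_one _
  calc ∑ K, dot x (w K • g K) ≤ ∑ K, w K := Finset.sum_le_sum fun K _ => hbound K
  _ = 1 := hs

end CCsec


section StepA

variable {N : (Fin d → ℝ) → ℝ}

lemma mem_CC_of_eq (hN : IsNorm N) (hom : OrthantMonotonic N) {l : ℕ} (hl : 1 ≤ l)
    {y : Fin d → ℝ} (hy : y ≠ 0) (heq : supportNorm N l y = dualNorm N y) :
    (dualNorm N y)⁻¹ • y ∈ CC N l := by
  set s := dualNorm N y with hsdef
  have hs : 0 < s := dualNorm_pos hN hom hy
  by_contra hp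
  obtain ⟨f, u, hfu, hup⟩ := geometric_hahn_banach_closed_point
    (CC_convex hN) (CC_isCompact hN l).isClosed hp
  set x : Fin d → ℝ := fun i => f (evec i) with hxdef
  have hfx : ∀ z : Fin d → ℝ, f z = dot x z := by
    intro z
    have hz : z = ∑ i, z i • evec i := by
      funext j
      rw [Finset.sum_apply]
      simp only [Pi.smul_apply, evec, Pi.single_apply, smul_eq_mul]
      rw [Finset.sum_eq_single j]
      · simp
      · intro b _ hb; simp [Ne.symm hb]
      · simp
    conv_lhs => rw [hz]
    rw [map_sum]
    unfold dot
    refine Finset.sum_congr rfl fun i _ => ?_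
    rw [map_smul]
    simp [hxdef, mul_comm]
  have hu : 0 < u := by
    have h0 := hfu 0 (zero_mem_CC hN)
    rwa [map_zero] at h0
  have htop : topNorm N l x ≤ u := by
    refine topNorm_le l x fun K hK => ?_
    obtain ⟨z, hz, hdot⟩ := exists_norming hN x K
    have hmem : z ∈ CC N l := DK_mem_CC hN ⟨K, hK⟩ hz
    have := hfu z hmem
    rw [hfx z] at this
    rw [← hdot]
    exact this.le
  have htop' : topNorm N l (u⁻¹ • x) ≤ 1 := by
    refine topNorm_le l _ fun K hK => ?_
    rw [proj_smul, hN.2.2.1]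
    have h1 : N (proj K x) ≤ u := (norm_proj_le_topNorm l x hK).trans htop
    rw [abs_of_pos (by positivity : (0:ℝ) < u⁻¹)]
    calc u⁻¹ * N (proj K x) ≤ u⁻¹ * u := by
          exact mul_le_mul_of_nonneg_left h1 (by positivity)
    _ = 1 := inv_mul_cancel₀ (ne_of_gt hu)
  have hval : s < dot (u⁻¹ • x) y := by
    have hfp : f (s⁻¹ • y) = s⁻¹ * f y := by
      rw [map_smul]; simp
    rw [hfp] at hup
    have hfy : u * s < f y := by
      have h3 : s * u < s * (s⁻¹ * f y) := mul_lt_mul_of_pos_left hup hs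
      have h4 : s * (s⁻¹ * f y) = f y := by field_simp
      rw [mul_comm]
      linarith
    rw [dot_smul_left, ← hfx]
    calc s = u⁻¹ * (u * s) := by field_simp
    _ < u⁻¹ * f y := by
        exact mul_lt_mul_of_pos_left hfy (by positivity)
  have hle : dot (u⁻¹ • x) y ≤ supportNorm N l y :=
    le_csSup (suppSet_bdd hN hl y) ⟨u⁻¹ • x, htop', rfl⟩
  rw [heq] at hle
  linarith

end StepA

section StepB

lemma extreme_of_convex_combo {B : Set (Fin d → ℝ)} (hB : Convex ℝ B)
    {p : Fin d → ℝ}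
    (hp : p ∈ B ∧ ∀ y ∈ B, ∀ z ∈ B, ∀ t : ℝ, 0 < t → t < 1 →
      p = t • y + (1 - t) • z → y = p ∧ z = p)
    {ι : Type*} [Fintype ι] (w : ι → ℝ) (g : ι → (Fin d → ℝ))
    (hw : ∀ i, 0 ≤ w i) (hw1 : ∑ i, w i = 1) (hg : ∀ i, g i ∈ B)
    (hpe : p = ∑ i, w i • g i) : ∀ i, 0 < w i → g i = p := by
  classical
  intro i hwi
  have hle : w i ≤ 1 := by
    rw [← hw1]
    exact Finset.single_le_sum (f := w) (fun j _ => hw j) (Finset.mem_univ i)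
  have hsplit : ∑ j, w j • g j = ∑ j ∈ Finset.univ.erase i, w j • g j + w i • g i := by
    rw [Finset.sum_erase_add _ _ (Finset.mem_univ i)]
  rcases eq_or_lt_of_le hle with h1 | h1
  · -- w i = 1, all other weights vanish
    have hrest : ∑ j ∈ Finset.univ.erase i, w j = 0 := by
      have := Finset.sum_erase_add Finset.univ w (Finset.mem_univ i)
      rw [hw1] at this
      rw [← h1] at this
      linarith
    have hz : ∀ j ∈ Finset.univ.erase i, w j = 0 :=
      (Finset.sum_eq_zero_iff_of_nonneg fun j _ => hw j).1 hrest
    have : p = g i := by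
      rw [hpe, hsplit, Finset.sum_eq_zero (fun j hj => by rw [hz j hj, zero_smul]), h1]
      simp
    exact this.symm
  · -- 0 < w i < 1
    set r : ℝ := 1 - w i with hrdef
    have hr : 0 < r := by simp [hrdef]; linarith
    set q : Fin d → ℝ := r⁻¹ • ∑ j ∈ Finset.univ.erase i, w j • g j with hqdef
    have hq : q ∈ B := by
      have hsum : ∑ j ∈ Finset.univ.erase i, (r⁻¹ * w j) = 1 := by
        rw [← Finset.mul_sum]
        have : ∑ j ∈ Finset.univ.erase i, w j = r := by
          have := Finset.sum_erase_add Finset.univ w (Finset.mem_univ i)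
          rw [hw1] at this
          rw [hrdef]; linarith
        rw [this, inv_mul_cancel₀ (ne_of_gt hr)]
      have heq2 : q = ∑ j ∈ Finset.univ.erase i, (r⁻¹ * w j) • g j := by
        rw [hqdef, Finset.smul_sum]
        exact Finset.sum_congr rfl fun j _ => smul_smul r⁻¹ (w j) (g j)
      rw [heq2]
      exact hB.sum_mem (fun j _ => mul_nonneg (inv_nonneg.2 hr.le) (hw j)) hsum
        (fun j _ => hg j)
    have hdecomp : p = w i • g i + (1 - w i) • q := by
      rw [hpe, hsplit, hqdef, ← hrdef, smul_smul, mul_inv_cancel₀ (ne_of_gt hr), one_smul]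
      exact add_comm _ _
    exact (hp.2 (g i) (hg i) q hq (w i) hwi h1 hdecomp).1

lemma dualBall_convex {N : (Fin d → ℝ) → ℝ} (hN : IsNorm N) (hom : OrthantMonotonic N) :
    Convex ℝ {z : Fin d → ℝ | dualNorm N z ≤ 1} := by
  rintro z₁ hz₁ z₂ hz₂ a b ha hb hab
  refine dualNorm_le hN fun x hx => ?_
  rw [dot_add_right, dot_smul_right, dot_smul_right]
  have h1 : dot x z₁ ≤ 1 := (le_dualNorm hN hom hx).trans hz₁
  have h2 : dot x z₂ ≤ 1 := (le_dualNorm hN hom hx).trans hz₂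
  calc a * dot x z₁ + b * dot x z₂ ≤ a * 1 + b * 1 :=
        add_le_add (mul_le_mul_of_nonneg_left h1 ha) (mul_le_mul_of_nonneg_left h2 hb)
  _ = 1 := by rw [mul_one, mul_one, hab]

end StepB


section Final

variable {N : (Fin d → ℝ) → ℝ}

lemma supportNorm_zero_vec (hN : IsNorm N) (k : ℕ) : supportNorm N k (0 : Fin d → ℝ) = 0 := by
  unfold supportNorm dualNorm
  have h : {r | ∃ x, topNorm N k x ≤ 1 ∧ r = dot x (0 : Fin d → ℝ)} = {0} := by
    ext r
    simp only [Set.mem_setOf_eq, Set.mem_singleton_iff]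
    constructor
    · rintro ⟨x, _, rfl⟩; exact dot_zero_right x
    · rintro rfl
      refine ⟨0, ?_, (dot_zero_right 0).symm⟩
      refine topNorm_le k 0 fun K _ => ?_
      rw [proj_zero, norm_zero' hN]; norm_num
  rw [h, csSup_singleton]

lemma graded_mp (hd : 0 < d) (hN : IsNorm N) (hom : OrthantMonotonic N)
    {y : Fin d → ℝ} {l : ℕ} (hly : l0 y ≤ l) :
    supportNorm N l y = supportNorm N d y := by
  have h2 : supportNorm N d y = dualNorm N y := supportNorm_d_eq_dualNorm hd hN hom y
  rcases Nat.eq_zero_or_pos l with rfl | hl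
  · have hy : y = 0 := l0_eq_zero_iff.1 (Nat.le_zero.1 hly)
    subst hy
    rw [supportNorm_zero_vec hN, supportNorm_zero_vec hN]
  · rw [supportNorm_eq_dualNorm hN hom hl hly, h2]

lemma graded_mpr (hd : 0 < d) (hN : IsNorm N) (hom : OrthantMonotonic N)
    (hsc : ∀ y : Fin d → ℝ, dualNorm N y = 1 →
      ExtremePt {z | dualNorm N z ≤ 1} y)
    {y : Fin d → ℝ} {l : ℕ}
    (heq : supportNorm N l y = supportNorm N d y) : l0 y ≤ l := by
  rcases eq_or_ne y 0 with rfl | hy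
  · simp [l0_zero]
  · have hs : 0 < dualNorm N y := dualNorm_pos hN hom hy
    have hd' : supportNorm N d y = dualNorm N y := supportNorm_d_eq_dualNorm hd hN hom y
    rcases Nat.eq_zero_or_pos l with rfl | hl
    · exfalso
      rw [supportNorm_zero_of_ne hN hy, hd'] at heq
      linarith
    · have heq' : supportNorm N l y = dualNorm N y := by rw [heq, hd']
      obtain ⟨w, g, hw, hw1, hg, hpe⟩ := mem_CC_of_eq hN hom hl hy heq'
      have hdp : dualNorm N ((dualNorm N y)⁻¹ • y) = 1 := by
        rw [dualNorm_smul hN hom (inv_pos.2 hs) y, inv_mul_cancel₀ (ne_of_gt hs)]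
      have hext := hsc _ hdp
      unfold ExtremePt at hext
      have hall := extreme_of_convex_combo (dualBall_convex hN hom)
        hext w g hw hw1
        (fun K => DK_subset_dualBall hN hom (hg K)) hpe
      obtain ⟨K, hK⟩ : ∃ K : KS d l, 0 < w K := by
        by_contra h
        push_neg at h
        have h0 : ∑ K : KS d l, w K = 0 :=
          Finset.sum_eq_zero fun K _ => le_antisymm (h K) (hw K)
        rw [hw1] at h0; norm_num at h0
      have hgK := hall K hK
      have hsub : ∀ j ∉ K.1, y j = 0 := by
        intro j hj
        have h1 := (hg K).1 j hj
        rw [hgK] at h1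
        have h2 : (dualNorm N y)⁻¹ * y j = 0 := h1
        rcases mul_eq_zero.1 h2 with h | h
        · exact absurd h (ne_of_gt (inv_pos.2 hs))
        · exact h
      have hsubf : suppF y ⊆ K.1 := fun i hi => by
        by_contra hiK
        exact (mem_suppF.1 hi) (hsub i hiK)
      calc l0 y = (suppF y).card := (suppF_card y).symm
      _ ≤ K.1.card := Finset.card_le_card hsubf
      _ ≤ l := K.2

end Final


/-- for an orthant-monotonic source norm, the sequence of
generalized k-support norms is nonincreasing and decreasingly graded w.r.t. the
ℓ0 pseudonorm; if moreover the dual normed space is strictly convex, the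
sequence is strictly decreasingly graded. -/
theorem supportNorm_decreasingly_graded_of_orthantMonotonic
    (hd : 0 < d) (N : (Fin d → ℝ) → ℝ) (hN : IsNorm N)
    (hom : OrthantMonotonic N) :
    ((∀ (y : Fin d → ℝ) (k l : ℕ), 1 ≤ k → k ≤ l → l ≤ d →
        supportNorm N l y ≤ supportNorm N k y) ∧
      (∀ (y : Fin d → ℝ) (l : ℕ), l ≤ d → l0 y ≤ l →
        supportNorm N l y = supportNorm N d y ∧
        supportNorm N d y = dualNorm N y)) ∧
    ((∀ y : Fin d → ℝ, dualNorm N y = 1 →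
        ExtremePt {z | dualNorm N z ≤ 1} y) →
      ∀ (y : Fin d → ℝ) (l : ℕ), l ≤ d →
        (l0 y ≤ l ↔ supportNorm N l y = supportNorm N d y)) := by
  constructor
  · constructor
    · intro y k l hk hkl _
      exact supportNorm_antitone hN hk hkl
    · intro y l _ hly
      exact ⟨graded_mp hd hN hom hly, supportNorm_d_eq_dualNorm hd hN hom y⟩
  · intro hsc y l _
    constructor
    · intro hly
      exact graded_mp hd hN hom hly
    · intro heq
      exact graded_mpr hd hN hom hsc heq

end OSMPaper
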